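/- arXiv:1102.3045 — 3 statements merged into one kernel-verified Lean document; each statement's English description precedes it below -/
import Mathlib

section
/- Let A be a subset of (ℤ/2ℤ)^n. Then there exists a basis e₁,…,eₙ of (ℤ/2ℤ)^n (as an 𝔽₂-vector space) such that every element of A is a sum of an odd number of basis vectors, if and only if no sum of an odd number of (not necessarily distinct) elements of A equals 0. -/
private lemma zmod2_eq_one_of_ne_zero {x : ZMod 2} (h : x ≠ 0) : x = 1 := by
  revert h; revert x; decide

private lemma zmod2_natCast_eq_one_iff (m : ℕ) : (m : ZMod 2) = 1 ↔ Odd m := by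
  rw [Nat.odd_iff, ← ZMod.natCast_mod m 2]
  have h : m % 2 = 0 ∨ m % 2 = 1 := by omega
  rcases h with h | h <;> rw [h] <;> decide

private lemma pi_add_self {n : ℕ} (x : Fin n → ZMod 2) : x + x = 0 := by
  rw [← two_smul (ZMod 2) x]
  have h : (2 : ZMod 2) = 0 := rfl
  rw [h, zero_smul]

/-- Every element of an `𝔽₂`-span is a sum of a list of elements of the generating set. -/
private lemma mem_span_zmod2 {V : Type*} [AddCommGroup V] [Module (ZMod 2) V]
    {s : Set V} {x : V} (hx : x ∈ Submodule.span (ZMod 2) s) :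
    ∃ l : List V, (∀ v ∈ l, v ∈ s) ∧ l.sum = x := by
  refine Submodule.span_induction ?_ ?_ ?_ ?_ hx
  · intro y hy; exact ⟨[y], by simpa using hy, by simp⟩
  · exact ⟨[], by simp, by simp⟩
  · rintro y z _ _ ⟨l₁, h₁, hs₁⟩ ⟨l₂, h₂, hs₂⟩
    refine ⟨l₁ ++ l₂, ?_, by simp [hs₁, hs₂]⟩
    intro v hv
    rcases List.mem_append.1 hv with h | h
    · exact h₁ v h
    · exact h₂ v h
  · rintro c y _ ⟨l, hl, hs⟩
    rcases eq_or_ne c 0 with rfl | hc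
    · exact ⟨[], by simp, by simp⟩
    · rw [zmod2_eq_one_of_ne_zero hc]
      exact ⟨l, hl, by simpa using hs⟩

/-- If a linear functional takes value `1` on every element of `A`, there is a basis in which
every element of `A` is an odd sum of basis vectors. -/
private lemma basis_of_functional (n : ℕ) (A : Set (Fin n → ZMod 2))
    (f : (Fin n → ZMod 2) →ₗ[ZMod 2] ZMod 2) (hf : ∀ a ∈ A, f a = 1) (hA : A.Nonempty) :
    ∃ e : Module.Basis (Fin n) (ZMod 2) (Fin n → ZMod 2),
      ∀ a ∈ A, ∃ l : List (Fin n), Odd l.length ∧ a = (l.map e).sum := by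
  classical
  -- `f` is nonzero, so it is `1` on some standard basis vector
  obtain ⟨a₀, ha₀⟩ := hA
  set b : Module.Basis (Fin n) (ZMod 2) (Fin n → ZMod 2) := Pi.basisFun (ZMod 2) (Fin n)
  have hex : ∃ j₀ : Fin n, f (b j₀) = 1 := by
    by_contra h
    push_neg at h
    have h0 : ∀ j, f (b j) = 0 := by
      intro j
      by_contra hj
      exact h j (zmod2_eq_one_of_ne_zero hj)
    have : f = 0 := by
      apply b.ext
      intro j; simp [h0 j]
    rw [this] at hf
    simpa using (hf a₀ ha₀)
  obtain ⟨j₀, hj₀⟩ := hex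
  -- the modified family
  set v : Fin n → (Fin n → ZMod 2) :=
    fun j => if f (b j) = 1 then b j else b j + b j₀ with hv
  have hfv : ∀ j, f (v j) = 1 := by
    intro j
    by_cases h : f (b j) = 1
    · simp [hv, h]
    · have : f (b j) = 0 := by
        rcases eq_or_ne (f (b j)) 0 with h0 | h0
        · exact h0
        · exact absurd (zmod2_eq_one_of_ne_zero h0) h
      simp [hv, h, map_add, this, hj₀]
  have hvj₀ : v j₀ = b j₀ := by simp [hv, hj₀]
  -- the linear map sending `b j` to `v j` is an involution, hence an equivalence
  set T : (Fin n → ZMod 2) →ₗ[ZMod 2] (Fin n → ZMod 2) := b.constr (ZMod 2) v with hT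
  have hTb : ∀ j, T (b j) = v j := fun j => b.constr_basis (ZMod 2) v j
  have hTT : T.comp T = LinearMap.id := by
    apply b.ext
    intro j
    simp only [LinearMap.comp_apply, LinearMap.id_apply, hTb]
    by_cases h : f (b j) = 1
    · have hvj : v j = b j := by simp [hv, h]
      rw [hvj, hTb, hvj]
    · have hvj : v j = b j + b j₀ := by simp [hv, h]
      rw [hvj, map_add, hTb, hTb, hvj, hvj₀, add_assoc, pi_add_self, add_zero]
  set E : (Fin n → ZMod 2) ≃ₗ[ZMod 2] (Fin n → ZMod 2) :=
    LinearEquiv.ofLinear T T hTT hTT with hE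
  set e : Module.Basis (Fin n) (ZMod 2) (Fin n → ZMod 2) := b.map E with he
  have heb : ∀ j, e j = v j := by
    intro j
    simp [he, hE, Module.Basis.map_apply, hTb j]
  refine ⟨e, ?_⟩
  intro a ha
  -- coordinates of `a` in basis `e`
  set c : Fin n →₀ ZMod 2 := e.repr a with hc
  have hsum : ∑ j ∈ c.support, e j = a := by
    have h1 : ∑ j, c j • e j = a := e.sum_repr a
    calc ∑ j ∈ c.support, e j = ∑ j ∈ c.support, c j • e j := by
          refine Finset.sum_congr rfl ?_
          intro j hj
          rw [zmod2_eq_one_of_ne_zero (Finsupp.mem_support_iff.1 hj), one_smul]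
      _ = ∑ j, c j • e j := by
          refine Finset.sum_subset (Finset.subset_univ _) ?_
          intro j _ hj
          rw [Finsupp.notMem_support_iff.1 hj, zero_smul]
      _ = a := h1
  have hodd : Odd c.support.card := by
    have h1 : f a = 1 := hf a ha
    have h2 : f a = (c.support.card : ZMod 2) := by
      rw [← hsum, map_sum]
      have : ∀ j ∈ c.support, f (e j) = 1 := by
        intro j _
        rw [heb j]; exact hfv j
      rw [Finset.sum_congr rfl this]
      simp [Finset.sum_const]
    rw [h2] at h1
    exact (zmod2_natCast_eq_one_iff _).1 h1
  refine ⟨c.support.toList, ?_, ?_⟩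
  · simpa [Finset.length_toList] using hodd
  · rw [Finset.sum_map_toList]
    exact hsum.symm

/-- A subset `A` of `(ℤ/2ℤ)^n` admits a basis of `(ℤ/2ℤ)^n` in which every
element of `A` is a sum of an odd number of basis vectors iff no sum of an odd number of
(not necessarily distinct) elements of `A` equals `0`. -/
theorem stmt0 (n : ℕ) (A : Set (Fin n → ZMod 2)) :
    (∃ e : Module.Basis (Fin n) (ZMod 2) (Fin n → ZMod 2),
      ∀ a ∈ A, ∃ l : List (Fin n), Odd l.length ∧ a = (l.map e).sum) ↔
    ¬ ∃ l : List (Fin n → ZMod 2), Odd l.length ∧ (∀ v ∈ l, v ∈ A) ∧ l.sum = 0 := by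
  classical
  constructor
  · -- forward: from such a basis, deduce no odd sum is zero
    rintro ⟨e, he⟩ ⟨l, hodd, hmem, hsum⟩
    -- the "sum of coordinates" functional
    set f : (Fin n → ZMod 2) →ₗ[ZMod 2] ZMod 2 := ∑ j, e.coord j with hf
    have hfe : ∀ i, f (e i) = 1 := by
      intro i
      simp only [hf, LinearMap.sum_apply, Module.Basis.coord_apply, Module.Basis.repr_self]
      simp [Finsupp.single_apply]
    have hfa : ∀ a ∈ A, f a = 1 := by
      intro a ha
      obtain ⟨la, hla, hrep⟩ := he a ha
      rw [hrep, map_list_sum, List.map_map]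
      have : la.map (f ∘ e) = la.map (fun _ => (1 : ZMod 2)) := by
        apply List.map_congr_left
        intro i _
        exact hfe i
      rw [this, List.map_const', List.sum_replicate, nsmul_eq_mul, mul_one]
      exact (zmod2_natCast_eq_one_iff _).2 hla
    have h1 : f l.sum = 1 := by
      rw [map_list_sum]
      have : l.map f = l.map (fun _ => (1 : ZMod 2)) := by
        apply List.map_congr_left
        intro a ha
        exact hfa a (hmem a ha)
      rw [this, List.map_const', List.sum_replicate, nsmul_eq_mul, mul_one]
      exact (zmod2_natCast_eq_one_iff _).2 hodd
    rw [hsum, map_zero] at h1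
    exact zero_ne_one h1
  · -- backward
    intro h
    rcases A.eq_empty_or_nonempty with rfl | hA
    · exact ⟨Pi.basisFun (ZMod 2) (Fin n), by simp⟩
    obtain ⟨a₀, ha₀⟩ := hA
    -- `a₀` is not in the span of `{a + a₀ : a ∈ A}`
    set W : Submodule (ZMod 2) (Fin n → ZMod 2) :=
      Submodule.span (ZMod 2) ((· + a₀) '' A) with hW
    have ha₀W : a₀ ∉ W := by
      intro hmem
      obtain ⟨l, hl, hsum⟩ := mem_span_zmod2 hmem
      -- replace each element of `l` by a pair of elements of `A`
      have : ∀ v ∈ l, ∃ a ∈ A, a + a₀ = v := by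
        intro v hv
        obtain ⟨a, ha, hav⟩ := hl v hv
        exact ⟨a, ha, hav⟩
      choose g hg hgv using this
      set l' : List (Fin n → ZMod 2) :=
        a₀ :: (l.attach.flatMap (fun v => [g v.1 v.2, a₀])) with hl'
      apply h
      refine ⟨l', ?_, ?_, ?_⟩
      · rw [hl']
        have hlen : (l.attach.flatMap (fun v => [g v.1 v.2, a₀])).length
            = l.length * 2 := by
          rw [List.length_flatMap]
          have h2 : l.attach.map (fun v => [g v.1 v.2, a₀].length)
              = l.attach.map (fun _ => 2) :=
            List.map_congr_left (fun v _ => rfl)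
          rw [h2, List.map_const', List.sum_replicate, smul_eq_mul,
            List.length_attach]
        simp only [List.length_cons, hlen]
        rw [Nat.odd_iff]
        omega
      · intro x hx
        rw [hl'] at hx
        rcases List.mem_cons.1 hx with rfl | hx
        · exact ha₀
        · obtain ⟨v, _, hv⟩ := List.mem_flatMap.1 hx
          simp only [List.mem_cons, List.not_mem_nil, or_false] at hv
          rcases hv with rfl | rfl
          · exact hg v.1 v.2
          · exact ha₀
      · rw [hl']
        simp only [List.sum_cons]
        have : (l.attach.flatMap (fun v => [g v.1 v.2, a₀])).sum = l.sum := by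
          rw [List.flatMap, List.sum_flatten, List.map_map]
          have : ∀ v ∈ l.attach, ([g v.1 v.2, a₀]).sum = v.1 := by
            intro v _
            simp only [List.sum_cons, List.sum_nil, add_zero]
            rw [hgv v.1 v.2]
          calc (l.attach.map (fun v => ([g v.1 v.2, a₀]).sum)).sum
              = (l.attach.map (fun v => v.1)).sum := by
                rw [List.map_congr_left this]
            _ = l.sum := by
                have := List.attach_map_val (l := l) (f := fun x => x)
                rw [this]
                simp
        rw [this, hsum, ← two_smul (ZMod 2) a₀]
        have h2 : (2 : ZMod 2) = 0 := by decide
        rw [h2, zero_smul]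
    obtain ⟨f, hf1, hfW⟩ := W.exists_dual_map_eq_bot_of_notMem ha₀W inferInstance
    have hfW0 : ∀ w ∈ W, f w = 0 := by
      intro w hw
      have : f w ∈ W.map f := Submodule.mem_map_of_mem hw
      rwa [hfW, Submodule.mem_bot] at this
    have hfa₀ : f a₀ = 1 := zmod2_eq_one_of_ne_zero hf1
    have hfa : ∀ a ∈ A, f a = 1 := by
      intro a ha
      have h1 : f (a + a₀) = 0 := hfW0 _ (Submodule.subset_span ⟨a, ha, rfl⟩)
      have : f a + f a₀ = 0 := by rw [← map_add]; exact h1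
      rw [hfa₀] at this
      have h2 : f a = -1 := by linear_combination this
      rw [h2]; decide
    exact basis_of_functional n A f hfa ⟨a₀, ha₀⟩
end

section
/- Let G ⊆ (ℤ/2ℤ)^n. There exists a function n : (ℤ/2ℤ)^n → ℤ, not identically zero, with n(ξ) = −n(ξ + g) for all ξ and g ∈ G, if and only if there is a group homomorphism χ : (ℤ/2ℤ)^n → ℤ/2ℤ with χ(g) = 1 for all g ∈ G. -/
/-- There is a not identically zero function `f : (ℤ/2ℤ)^n → ℤ` with
`f ξ = - f (ξ + g)` for all `g ∈ G` iff there is a group homomorphism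
`χ : (ℤ/2ℤ)^n → ℤ/2ℤ` with `χ g = 1` for all `g ∈ G`. -/
theorem stmt7 (n : ℕ) (G : Set (Fin n → ZMod 2)) :
    (∃ f : (Fin n → ZMod 2) → ℤ, f ≠ 0 ∧ ∀ ξ, ∀ g ∈ G, f ξ = - f (ξ + g)) ↔
    (∃ χ : (Fin n → ZMod 2) →+ ZMod 2, ∀ g ∈ G, χ g = 1) := by
  classical
  constructor
  · rintro ⟨f, hf, hsign⟩
    obtain ⟨ξ₀, hξ₀⟩ : ∃ ξ₀, f ξ₀ ≠ 0 := by
      by_contra h; push_neg at h; exact hf (funext h)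
    set H : Submodule (ZMod 2) (Fin n → ZMod 2) := Submodule.span (ZMod 2) G with hH
    have key : ∀ h ∈ H, (∀ ξ, f (ξ + h) = f ξ) ∨ (∀ ξ, f (ξ + h) = - f ξ) := by
      intro h hh
      refine Submodule.span_induction ?_ ?_ ?_ ?_ hh
      · intro g hg
        right; intro ξ
        have := hsign ξ g hg; linarith
      · left; intro ξ; simp
      · intro a b _ _ ha hb
        rcases ha with ha | ha <;> rcases hb with hb | hb
        · left; intro ξ; rw [← add_assoc, hb, ha]
        · right; intro ξ; rw [← add_assoc, hb, ha]
        · right; intro ξ; rw [← add_assoc, hb, ha]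
        · left; intro ξ; rw [← add_assoc, hb, ha]; ring
      · intro c a _ ha
        fin_cases c
        · left; intro ξ; show f (ξ + (0 : ZMod 2) • a) = f ξ; simp
        · rcases ha with ha | ha
          · left; intro ξ; show f (ξ + (1 : ZMod 2) • a) = f ξ; simpa using ha ξ
          · right; intro ξ; show f (ξ + (1 : ZMod 2) • a) = -f ξ; simpa using ha ξ
    set val : (Fin n → ZMod 2) → ZMod 2 :=
      fun h => if (∀ ξ, f (ξ + h) = f ξ) then 0 else 1 with hval
    have A : ∀ h ∈ H, (val h = 0 ∧ ∀ ξ, f (ξ + h) = f ξ) ∨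
        (val h = 1 ∧ ∀ ξ, f (ξ + h) = - f ξ) := by
      intro h hh
      rcases key h hh with hk | hk
      · left; exact ⟨if_pos hk, hk⟩
      · right
        refine ⟨if_neg ?_, hk⟩
        intro hcon
        have h1 := hcon ξ₀
        have h2 := hk ξ₀
        have : f ξ₀ = 0 := by linarith
        exact hξ₀ this
    have addval : ∀ a ∈ H, ∀ b ∈ H, val (a + b) = val a + val b := by
      intro a ha b hb
      rcases A a ha with ⟨va, sa⟩ | ⟨va, sa⟩ <;>
        rcases A b hb with ⟨vb, sb⟩ | ⟨vb, sb⟩ <;>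
        rcases A (a + b) (add_mem ha hb) with ⟨vab, sab⟩ | ⟨vab, sab⟩ <;>
        rw [va, vb, vab] <;>
        first
          | decide
          | (exfalso
             have h1 := sa ξ₀
             have h2 := sb (ξ₀ + a)
             have h3 := sab ξ₀
             rw [← add_assoc] at h3
             have : f ξ₀ = 0 := by linarith
             exact hξ₀ this)
    let χ₀ : H →+ ZMod 2 := AddMonoidHom.mk' (fun h => val h.val)
      (fun a b => addval a.val a.2 b.val b.2)
    obtain ⟨χL, hχL⟩ := LinearMap.exists_extend (χ₀.toZModLinearMap 2)
    refine ⟨χL.toAddMonoidHom, ?_⟩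
    intro g hg
    have hgH : g ∈ H := Submodule.subset_span hg
    have : χL g = val g := LinearMap.congr_fun hχL ⟨g, hgH⟩
    rw [LinearMap.toAddMonoidHom_coe, this]
    rcases A g hgH with ⟨vg, sg⟩ | ⟨vg, sg⟩
    · exfalso
      have h1 := sg ξ₀
      have h2 := hsign ξ₀ g hg
      have : f ξ₀ = 0 := by linarith
      exact hξ₀ this
    · exact vg
  · rintro ⟨χ, hχ⟩
    refine ⟨fun ξ => if χ ξ = 0 then 1 else -1, ?_, ?_⟩
    · intro h
      have h0 : (if χ 0 = (0 : ZMod 2) then (1 : ℤ) else -1) = 0 := congrFun h 0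
      rw [if_pos (map_zero χ)] at h0
      exact one_ne_zero h0
    · intro ξ g hg
      have hzm : ∀ x : ZMod 2, x = 0 ∨ x = 1 := by decide
      have hadd : χ (ξ + g) = χ ξ + 1 := by rw [map_add, hχ g hg]
      have h11 : (1 : ZMod 2) + 1 = 0 := by decide
      rcases hzm (χ ξ) with hx | hx <;> simp [hadd, hx, h11]
end

section
/- Let P be a finite poset. All maximal chains of P have odd length if and only if there exists a function r : P → ℤ/2ℤ such that r(a) = 1 for every minimal element a, r(b) = 0 for every maximal element b, and r(a) ≠ r(b) whenever a ⋖ b is a cover relation. -/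
section Aux
variable {P : Type*} [Fintype P] [PartialOrder P]

/-- Extend a saturated chain ending at `a` by one cover step `a ⋖ b`. -/
private lemma stmt13_snoc {a b : P} (hab : a ⋖ b) {k : ℕ} (c : Fin (k+1) → P)
    (hc : ∀ i : Fin k, c i.castSucc ⋖ c i.succ) (hlast : c (Fin.last k) = a) :
    ∃ c' : Fin (k+1+1) → P, (∀ i : Fin (k+1), c' i.castSucc ⋖ c' i.succ) ∧
      c' 0 = c 0 ∧ c' (Fin.last (k+1)) = b := by
  refine ⟨Fin.snoc c b, ?_, ?_, ?_⟩
  · intro i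
    induction i using Fin.lastCases with
    | last =>
      rw [Fin.succ_last, Fin.snoc_last, Fin.snoc_castSucc, hlast]
      exact hab
    | cast j =>
      rw [Fin.succ_castSucc, Fin.snoc_castSucc, Fin.snoc_castSucc]
      exact hc j
  · have : (0 : Fin (k+2)) = (0 : Fin (k+1)).castSucc := rfl
    rw [this, Fin.snoc_castSucc]
  · simp [Fin.snoc_last]

private lemma stmt13_down (x : P) : ∃ k, ∃ c : Fin (k+1) → P,
    (∀ i : Fin k, c i.castSucc ⋖ c i.succ) ∧ IsMin (c 0) ∧ c (Fin.last k) = x := by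
  induction x using WellFoundedLT.induction with
  | _ x ih =>
    by_cases hx : IsMin x
    · exact ⟨0, fun _ => x, fun i => i.elim0, hx, rfl⟩
    · obtain ⟨y, hy⟩ := exists_covBy_of_wellFoundedGT hx
      obtain ⟨k, c, hc, hmin, hlast⟩ := ih y hy.lt
      obtain ⟨c', hc', h0, hl⟩ := stmt13_snoc hy c hc hlast
      exact ⟨k+1, c', hc', h0 ▸ hmin, hl⟩

private lemma stmt13_up (x : P) : ∃ k, ∃ c : Fin (k+1) → P,
    (∀ i : Fin k, c i.castSucc ⋖ c i.succ) ∧ c 0 = x ∧ IsMax (c (Fin.last k)) := by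
  induction x using WellFoundedGT.induction with
  | _ x ih =>
    by_cases hx : IsMax x
    · exact ⟨0, fun _ => x, fun i => i.elim0, rfl, hx⟩
    · obtain ⟨y, hy⟩ := exists_covBy_of_wellFoundedLT hx
      obtain ⟨k, c, hc, hfirst, hmax⟩ := ih y hy.lt
      refine ⟨k+1, Fin.cons x c, ?_, rfl, ?_⟩
      · intro i
        induction i using Fin.cases with
        | zero =>
          have h1 : (0 : Fin (k+1)).castSucc = 0 := rfl
          rw [h1, Fin.cons_zero, Fin.succ_zero_eq_one]
          have h2 : (1 : Fin (k+2)) = Fin.succ 0 := rfl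
          rw [h2, Fin.cons_succ, hfirst]
          exact hy
        | succ j =>
          rw [← Fin.succ_castSucc, Fin.cons_succ, Fin.cons_succ]
          exact hc j
      · have : Fin.last (k+1) = Fin.succ (Fin.last k) := rfl
        rw [this, Fin.cons_succ]; exact hmax

/-- Concatenate a saturated chain ending at `x` with one starting at `x`. -/
private lemma stmt13_concat {x : P} {m t : ℕ} (c : Fin (m+1) → P) (u : Fin (t+1) → P)
    (hc : ∀ i : Fin m, c i.castSucc ⋖ c i.succ) (hu : ∀ i : Fin t, u i.castSucc ⋖ u i.succ)
    (hcx : c (Fin.last m) = x) (hux : u 0 = x) :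
    ∃ w : Fin (m+t+1) → P, (∀ i : Fin (m+t), w i.castSucc ⋖ w i.succ) ∧
      w 0 = c 0 ∧ w (Fin.last (m+t)) = u (Fin.last t) := by
  refine ⟨fun i => if h : i.val ≤ m then c ⟨i.val, by omega⟩ else u ⟨i.val - m, by omega⟩,
    ?_, ?_, ?_⟩
  · intro i
    have hi : i.val < m + t := i.isLt
    have hcs : (i.castSucc : Fin (m+t+1)).val = i.val := rfl
    have hss : (i.succ : Fin (m+t+1)).val = i.val + 1 := rfl
    by_cases h1 : i.val + 1 ≤ m
    · simp only [hcs, hss, dif_pos (by omega : i.val ≤ m), dif_pos h1]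
      convert hc ⟨i.val, by omega⟩ using 2 <;> exact Fin.ext rfl
    · by_cases h2 : i.val ≤ m
      · have hm : i.val = m := by omega
        have ht : 0 < t := by omega
        simp only [hcs, hss, dif_pos h2, dif_neg h1]
        have e1 : c ⟨i.val, by omega⟩ = u ((⟨0, ht⟩ : Fin t).castSucc) := by
          have : c ⟨i.val, by omega⟩ = c (Fin.last m) := by
            congr 1; exact Fin.ext (by simp [Fin.last, hm])
          rw [this, hcx, ← hux]; rfl
        have e2 : u ⟨i.val + 1 - m, by omega⟩ = u ((⟨0, ht⟩ : Fin t).succ) := by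
          congr 1; exact Fin.ext (by simp [hm])
        rw [e1, e2]
        exact hu _
      · simp only [hcs, hss, dif_neg h2, dif_neg (by omega : ¬ i.val + 1 ≤ m)]
        have hj : i.val - m < t := by omega
        convert hu ⟨i.val - m, hj⟩ using 2 <;>
          exact Fin.ext (by simp [Fin.val_succ, Fin.coe_castSucc] <;> omega)
  · simp only [Fin.val_zero, dif_pos (Nat.zero_le m)]
    congr 1
  · by_cases ht : t = 0
    · subst ht
      simp only [Fin.last, dif_pos (by omega : m + 0 ≤ m)]
      have e1 : c ⟨m + 0, by omega⟩ = c (Fin.last m) := by congr 1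
      have e2 : u (Fin.last 0) = u 0 := by congr 1
      rw [e1, hcx, ← hux]
      congr 1
    · have hlt : ¬ (Fin.last (m+t)).val ≤ m := by simp [Fin.last]; omega
      simp only [dif_neg hlt]
      congr 1
      exact Fin.ext (by simp [Fin.last])

end Aux

/-- All maximal chains of a finite poset `P` have an odd number of cover steps
iff there is `r : P → ℤ/2ℤ` with `r = 1` on minimal elements, `r = 0` on maximal elements,
and `r a ≠ r b` for every cover `a ⋖ b`. -/
theorem stmt13 (P : Type*) [Fintype P] [PartialOrder P] :
    (∀ (k : ℕ) (c : Fin (k + 1) → P), (∀ i : Fin k, c i.castSucc ⋖ c i.succ) →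
      IsMin (c 0) → IsMax (c (Fin.last k)) → Odd k) ↔
    (∃ r : P → ZMod 2, (∀ a, IsMin a → r a = 1) ∧ (∀ b, IsMax b → r b = 0) ∧
      ∀ a b : P, a ⋖ b → r a ≠ r b) := by
  constructor
  · intro H
    -- any two saturated chains from a minimal element to `x` have the same parity
    have key : ∀ x : P, ∀ m n : ℕ, ∀ c : Fin (m+1) → P, ∀ c' : Fin (n+1) → P,
        (∀ i : Fin m, c i.castSucc ⋖ c i.succ) → IsMin (c 0) → c (Fin.last m) = x →
        (∀ i : Fin n, c' i.castSucc ⋖ c' i.succ) → IsMin (c' 0) → c' (Fin.last n) = x →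
        (m : ZMod 2) = n := by
      intro x m n c c' hc hcmin hcx hc' hc'min hc'x
      obtain ⟨t, u, hu, hux, humax⟩ := stmt13_up x
      obtain ⟨w, hw, hw0, hwl⟩ := stmt13_concat c u hc hu hcx hux
      obtain ⟨w', hw', hw'0, hw'l⟩ := stmt13_concat c' u hc' hu hc'x hux
      have h1 : Odd (m + t) := H _ w hw (hw0 ▸ hcmin) (hwl ▸ humax)
      have h2 : Odd (n + t) := H _ w' hw' (hw'0 ▸ hc'min) (hw'l ▸ humax)
      have hmn : m % 2 = n % 2 := by rw [Nat.odd_iff] at h1 h2; omega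
      calc (m : ZMod 2) = ((m % 2 : ℕ) : ZMod 2) := (ZMod.natCast_mod m 2).symm
        _ = ((n % 2 : ℕ) : ZMod 2) := by rw [hmn]
        _ = (n : ZMod 2) := ZMod.natCast_mod n 2
    choose d cc hcc hccmin hccx using fun x : P => stmt13_down x
    refine ⟨fun x => (d x : ZMod 2) + 1, ?_, ?_, ?_⟩
    · intro a ha
      have : (d a : ZMod 2) = (0 : ℕ) :=
        key a (d a) 0 (cc a) (fun _ => a) (hcc a) (hccmin a) (hccx a)
          (fun i => i.elim0) ha rfl
      show (d a : ZMod 2) + 1 = 1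
      rw [this]; decide
    · intro b hb
      have hodd : Odd (d b) := H (d b) (cc b) (hcc b) (hccmin b) ((hccx b).symm ▸ hb)
      have : (d b : ZMod 2) = 1 := by
        rw [Nat.odd_iff] at hodd
        calc (d b : ZMod 2) = ((d b % 2 : ℕ) : ZMod 2) := (ZMod.natCast_mod _ 2).symm
          _ = ((1 : ℕ) : ZMod 2) := by rw [hodd]
          _ = 1 := by norm_num
      show (d b : ZMod 2) + 1 = 0
      rw [this]; decide
    · intro a b hab
      obtain ⟨c', hc', h0, hl⟩ := stmt13_snoc hab (cc a) (hcc a) (hccx a)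
      have : (d b : ZMod 2) = ((d a + 1 : ℕ) : ZMod 2) :=
        key b (d b) (d a + 1) (cc b) c' (hcc b) (hccmin b) (hccx b)
          hc' (h0 ▸ hccmin a) hl
      show (d a : ZMod 2) + 1 ≠ (d b : ZMod 2) + 1
      rw [this]
      push_cast
      have hne : ∀ z : ZMod 2, z + 1 ≠ z + 1 + 1 := by decide
      exact hne _
  · rintro ⟨r, hrmin, hrmax, hrcov⟩ k c hc h0 hl
    have flip : ∀ a b : ZMod 2, a ≠ b → b = a + 1 := by decide
    have step : ∀ i : Fin (k+1), r (c i) = r (c 0) + (i.val : ZMod 2) := by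
      intro i
      induction i using Fin.induction with
      | zero => simp
      | succ j ihj =>
        have := flip _ _ (hrcov _ _ (hc j))
        rw [this, ihj]
        have : ((j.succ : Fin (k+1)).val : ZMod 2) = ((j.castSucc : Fin (k+1)).val : ZMod 2) + 1 := by
          rw [Fin.val_succ, Fin.coe_castSucc]
          push_cast
          ring
        rw [this]
        ring
    have h1 : r (c (Fin.last k)) = r (c 0) + (k : ZMod 2) := by
      have := step (Fin.last k)
      simpa [Fin.last] using this
    rw [hrmax _ hl, hrmin _ h0] at h1
    have hk1 : (k : ZMod 2) = 1 := by
      have : (1 : ZMod 2) + (k : ZMod 2) = 0 := h1.symm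
      have h2 : ∀ z : ZMod 2, (1 : ZMod 2) + z = 0 → z = 1 := by decide
      exact h2 _ this
    rw [Nat.odd_iff]
    rcases Nat.mod_two_eq_zero_or_one k with h | h
    · exfalso
      have : (k : ZMod 2) = 0 := by
        calc (k : ZMod 2) = ((k % 2 : ℕ) : ZMod 2) := (ZMod.natCast_mod _ 2).symm
          _ = ((0 : ℕ) : ZMod 2) := by rw [h]
          _ = 0 := by norm_num
      rw [this] at hk1; exact absurd hk1 (by decide)
    · exact h
end
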